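/- The fundamental group of the torus knot complement, ⟨x, y : xᵖ = y^q⟩ with p, q ≥ 2 coprime, has a proper finite-index subgroup isomorphic to itself; specifically, for any d ≥ 2 coprime to pq, the kernel of the composition of the abelianization-induced map G → ℤ (sending x ↦ q, y ↦ p) with reduction ℤ → ℤ/d is an index-d subgroup of G isomorphic to G. -/

import Mathlib

/-- The relator set for the torus knot group `⟨x, y : xᵖ = y^q⟩`, with `x` the
generator `true` and `y` the generator `false`. -/
def torusKnotRels (p q : ℕ) : Set (FreeGroup Bool) :=
  {(FreeGroup.of true) ^ p * ((FreeGroup.of false) ^ q)⁻¹}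

namespace TorusKnotClone

open Monoid PushoutI Multiplicative

def am (p q : ℕ) : ∀ _ : Bool, Multiplicative ℤ →* Multiplicative ℤ :=
  fun b => zpowGroupHom (if b then (p : ℤ) else (q : ℤ))

lemma zpow_inj_mz {n : ℤ} (hn : n ≠ 0) :
    Function.Injective (fun x : Multiplicative ℤ => x ^ n) := by
  intro a b h
  have : toAdd a * n = toAdd b * n := by
    simpa [toAdd_zpow, mul_comm] using congrArg toAdd h
  exact toAdd.injective (mul_right_cancel₀ hn this)

lemma am_injective (p q : ℕ) (hp : p ≠ 0) (hq : q ≠ 0) :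
    ∀ b, Function.Injective (am p q b) := by
  intro b
  have : (if b then (p:ℤ) else (q:ℤ)) ≠ 0 := by cases b <;> simp [hp, hq]
  exact zpow_inj_mz this

variable (p q d : ℕ)

/-- Scaling a reduced word letterwise by `d ≠ 0`. -/
def scaleWord (hd : (d:ℤ) ≠ 0) (u : Monoid.CoprodI.Word (fun _ : Bool => Multiplicative ℤ)) :
    Monoid.CoprodI.Word (fun _ : Bool => Multiplicative ℤ) where
  toList := u.toList.map fun l => ⟨l.1, l.2 ^ (d:ℤ)⟩
  ne_one := by
    rintro l hl
    simp only [List.mem_map] at hl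
    obtain ⟨l', hl', rfl⟩ := hl
    have h1 := u.ne_one l' hl'
    simp only [ne_eq]
    intro h
    exact h1 (zpow_inj_mz hd (show l'.2 ^ (d:ℤ) = (1:Multiplicative ℤ) ^ (d:ℤ) by simpa using h))
  chain_ne := by
    rw [List.isChain_map]
    exact List.IsChain.imp (fun a b h => h) u.chain_ne

/-- Scaling as an endomorphism of the free product. -/
def σ : Monoid.CoprodI (fun _ : Bool => Multiplicative ℤ) →*
    Monoid.CoprodI (fun _ : Bool => Multiplicative ℤ) :=
  Monoid.CoprodI.lift (fun i =>
    (Monoid.CoprodI.of (M := fun _ : Bool => Multiplicative ℤ) (i := i)).comp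
      (zpowGroupHom (d:ℤ)))

lemma σ_of (i : Bool) (m : Multiplicative ℤ) :
    σ d (Monoid.CoprodI.of (i := i) m) = Monoid.CoprodI.of (i := i) (m ^ (d:ℤ)) := by
  rw [σ, Monoid.CoprodI.lift_of]; rfl

lemma σ_prod (hd : (d:ℤ) ≠ 0) (u : Monoid.CoprodI.Word (fun _ : Bool => Multiplicative ℤ)) :
    σ d u.prod = (scaleWord d hd u).prod := by
  rw [Monoid.CoprodI.Word.prod, Monoid.CoprodI.Word.prod, map_list_prod, scaleWord]
  simp only [List.map_map]
  exact congrArg List.prod (List.map_congr_left (fun l _ => σ_of d l.1 l.2))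

lemma am_comm (i : Bool) (m : Multiplicative ℤ) :
    (am p q i m) ^ (d:ℤ) = am p q i (m ^ (d:ℤ)) := by
  have h : ∀ k : ℤ, (m ^ k) ^ (d:ℤ) = (m ^ (d:ℤ)) ^ k := fun k => by
    rw [← zpow_mul, ← zpow_mul, mul_comm]
  cases i <;> exact h _

lemma Ψcompat : ∀ i, (((PushoutI.of (φ := am p q) i).comp (zpowGroupHom (d:ℤ))).comp (am p q i)) =
    (PushoutI.base (am p q)).comp (zpowGroupHom (d:ℤ)) := by
  intro i
  refine MonoidHom.ext fun m => ?_
  show PushoutI.of i ((am p q i m) ^ (d:ℤ)) = PushoutI.base (am p q) (m ^ (d:ℤ))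
  rw [am_comm]
  exact PushoutI.of_apply_eq_base (am p q) i _

/-- The scaling endomorphism of the pushout. -/
def Ψ : PushoutI (am p q) →* PushoutI (am p q) :=
  PushoutI.lift (fun i => (PushoutI.of i).comp (zpowGroupHom (d:ℤ)))
    ((PushoutI.base (am p q)).comp (zpowGroupHom (d:ℤ))) (Ψcompat p q d)

lemma Ψ_of (i : Bool) (m : Multiplicative ℤ) :
    Ψ p q d (PushoutI.of i m) = PushoutI.of i (m ^ (d:ℤ)) := by
  rw [Ψ]
  rw [show (PushoutI.of (φ := am p q) i) m = (PushoutI.of (φ := am p q) i : Multiplicative ℤ →* _) m from rfl]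
  rw [PushoutI.lift_of]
  rfl

lemma Ψ_base (m : Multiplicative ℤ) :
    Ψ p q d (PushoutI.base (am p q) m) = PushoutI.base (am p q) (m ^ (d:ℤ)) :=
  PushoutI.lift_base _ _ _ m

lemma Ψ_ofCoprodI (x : Monoid.CoprodI (fun _ : Bool => Multiplicative ℤ)) :
    Ψ p q d (PushoutI.ofCoprodI x) = PushoutI.ofCoprodI (σ d x) := by
  have : (Ψ p q d).comp PushoutI.ofCoprodI = (PushoutI.ofCoprodI).comp (σ d) := by
    apply Monoid.CoprodI.ext_hom
    intro i
    refine MonoidHom.ext fun m => ?_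
    simp only [MonoidHom.comp_apply, PushoutI.ofCoprodI_of]
    rw [Ψ_of, σ_of]
    simp [PushoutI.ofCoprodI_of]
  exact DFunLike.congr_fun this x

lemma mem_am_range_iff (i : Bool) (m : Multiplicative ℤ) :
    m ∈ (am p q i).range ↔ (if i then (p:ℤ) else (q:ℤ)) ∣ toAdd m := by
  constructor
  · rintro ⟨y, rfl⟩
    exact ⟨toAdd y, by
      show toAdd (y ^ (if i = true then (p:ℤ) else (q:ℤ))) = _
      rw [toAdd_zpow, smul_eq_mul]⟩
  · rintro ⟨c, hc⟩
    refine ⟨ofAdd c, ?_⟩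
    show (ofAdd c) ^ (if i = true then (p:ℤ) else (q:ℤ)) = m
    apply toAdd.injective
    rw [toAdd_zpow, smul_eq_mul, toAdd_ofAdd, ← hc]

lemma not_mem_range_of_mem_set {p q : ℕ} (T : NormalWord.Transversal (am p q)) {i : Bool}
    {m : Multiplicative ℤ} (hm : m ∈ T.set i) (h1 : m ≠ 1) : m ∉ (am p q i).range := by
  intro hr
  obtain ⟨x, hx, hxu⟩ := (T.compl i).existsUnique m
  have e1 := hxu ⟨⟨m, hr⟩, ⟨1, T.one_mem i⟩⟩ (by simp)
  have e2 := hxu ⟨⟨1, (am p q i).range.one_mem⟩, ⟨m, hm⟩⟩ (by simp)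
  have h2 : ((1 : Multiplicative ℤ)) = m := congrArg (fun z => (z.2 : Multiplicative ℤ)) (e1.trans e2.symm)
  exact h1 h2.symm


theorem Ψ_injective (hp : p ≠ 0) (hq : q ≠ 0) (hd : d ≠ 0)
    (hdp : Nat.Coprime d p) (hdq : Nat.Coprime d q) :
    Function.Injective (Ψ p q d) := by
  classical
  have hdz : (d:ℤ) ≠ 0 := Int.natCast_ne_zero.2 hd
  have hinj := am_injective p q hp hq
  rw [injective_iff_map_eq_one]
  obtain ⟨T⟩ := NormalWord.transversal_nonempty (am p q) hinj
  intro g hg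
  have hgw : (NormalWord.equiv (d := T) g).prod = g :=
    (NormalWord.equiv (d := T)).symm_apply_apply g
  set w : NormalWord T := NormalWord.equiv (d := T) g with hwdef
  set u : Monoid.CoprodI.Word (fun _ : Bool => Multiplicative ℤ) := w.toWord with hudef
  have hsplit : g = PushoutI.base (am p q) w.head * PushoutI.ofCoprodI u.prod := by
    rw [← hgw]; rfl
  have hg2 : PushoutI.base (am p q) (w.head ^ (d:ℤ)) *
      PushoutI.ofCoprodI ((scaleWord d hdz u).prod) = 1 := by
    rw [← σ_prod, ← Ψ_ofCoprodI, ← Ψ_base, ← map_mul, ← hsplit]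
    exact hg
  have hmem : PushoutI.ofCoprodI ((scaleWord d hdz u).prod) ∈ (PushoutI.base (am p q)).range := by
    refine ⟨(w.head ^ (d:ℤ))⁻¹, ?_⟩
    rw [map_inv]
    exact (inv_eq_of_mul_eq_one_right hg2)
  have hred : Reduced (am p q) (scaleWord d hdz u) := by
    rintro ⟨i, x⟩ hl
    simp only [scaleWord, List.mem_map] at hl
    obtain ⟨l', hl', hl2⟩ := hl
    have hfst : l'.1 = i := congrArg Sigma.fst hl2
    subst hfst
    have hsnd : l'.2 ^ (d:ℤ) = x := by
      have := (Sigma.mk.inj_iff.1 hl2).2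
      exact eq_of_heq this
    subst hsnd
    have hmset : l'.2 ∈ T.set l'.1 := w.normalized l'.1 l'.2 (by
      have : (⟨l'.1, l'.2⟩ : (_ : Bool) × Multiplicative ℤ) = l' := rfl
      rw [this]; exact hl')
    have hne1 : l'.2 ≠ 1 := u.ne_one l' hl'
    have hnr : l'.2 ∉ (am p q l'.1).range := not_mem_range_of_mem_set T hmset hne1
    intro hr
    apply hnr
    rw [mem_am_range_iff] at hr ⊢
    rw [toAdd_zpow, smul_eq_mul] at hr
    have hcop : IsCoprime ((if l'.1 then (p:ℤ) else (q:ℤ))) (d:ℤ) := by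
      cases l'.1 <;> simp only [if_true, if_false, Bool.false_eq_true] <;>
        [exact (Nat.isCoprime_iff_coprime.2 hdq.symm); exact (Nat.isCoprime_iff_coprime.2 hdp.symm)]
    exact hcop.dvd_of_dvd_mul_left hr
  have hempty := hred.eq_empty_of_mem_range hinj hmem
  have hnil : u.toList = [] := by
    have : u.toList.map (fun l => (⟨l.1, l.2 ^ (d:ℤ)⟩ : (_ : Bool) × Multiplicative ℤ)) = [] :=
      congrArg Monoid.CoprodI.Word.toList hempty
    exact List.map_eq_nil_iff.1 this
  have huprod : u.prod = 1 := by
    rw [Monoid.CoprodI.Word.prod, hnil]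
    rfl
  have hgbase : g = PushoutI.base (am p q) w.head := by
    rw [hsplit, huprod, map_one, mul_one]
  have hhead : w.head ^ (d:ℤ) = 1 := by
    apply PushoutI.base_injective hinj
    rw [← Ψ_base, ← hgbase, hg, map_one]
  have : w.head = 1 := zpow_inj_mz hdz (by simpa using hhead)
  rw [hgbase, this, map_one]

/-! ### The presented group and its identification with the pushout -/

lemma rel : (PresentedGroup.of (rels := torusKnotRels p q) true) ^ p =
    (PresentedGroup.of false) ^ q := by
  have h : PresentedGroup.mk (torusKnotRels p q)
      (FreeGroup.of true ^ p * (FreeGroup.of false ^ q)⁻¹) = 1 := by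
    apply (QuotientGroup.eq_one_iff _).2
    exact Subgroup.subset_normalClosure rfl
  rw [map_mul, map_inv, map_pow, map_pow] at h
  exact mul_inv_eq_one.1 h

lemma relcheck : ∀ r ∈ torusKnotRels p q,
    FreeGroup.lift (fun b => PushoutI.of (φ := am p q) b (ofAdd 1)) r = 1 := by
  rintro r rfl
  rw [map_mul, map_inv, map_pow, map_pow, FreeGroup.lift_apply_of, FreeGroup.lift_apply_of]
  have h1 : (PushoutI.of (φ := am p q) true (ofAdd 1)) ^ p =
      PushoutI.base (am p q) (ofAdd 1) := by
    rw [← map_pow]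
    rw [show ((ofAdd 1 : Multiplicative ℤ) ^ p) = am p q true (ofAdd 1) by
      show _ = (ofAdd 1 : Multiplicative ℤ) ^ (p:ℤ); rw [zpow_natCast]]
    exact PushoutI.of_apply_eq_base (am p q) true _
  have h2 : (PushoutI.of (φ := am p q) false (ofAdd 1)) ^ q =
      PushoutI.base (am p q) (ofAdd 1) := by
    rw [← map_pow]
    rw [show ((ofAdd 1 : Multiplicative ℤ) ^ q) = am p q false (ofAdd 1) by
      show _ = (ofAdd 1 : Multiplicative ℤ) ^ (q:ℤ); rw [zpow_natCast]]
    exact PushoutI.of_apply_eq_base (am p q) false _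
  rw [h1, h2, mul_inv_cancel]

/-- From the presented group to the pushout. -/
def Φ : PresentedGroup (torusKnotRels p q) →* PushoutI (am p q) :=
  PresentedGroup.toGroup (relcheck p q)

lemma Φ_of (b : Bool) : Φ p q (PresentedGroup.of b) = PushoutI.of (φ := am p q) b (ofAdd 1) :=
  PresentedGroup.toGroup.of _

lemma Φ'compat : ∀ b, (zpowersHom (PresentedGroup (torusKnotRels p q))
      (if b then PresentedGroup.of true else PresentedGroup.of false)).comp (am p q b) =
    zpowersHom _ ((PresentedGroup.of (rels := torusKnotRels p q) true) ^ p) := by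
  intro b
  refine MonoidHom.ext_mint ?_
  cases b
  · simp only [MonoidHom.comp_apply, zpowersHom_apply, Bool.false_eq_true, if_false, zpow_one]
    show (PresentedGroup.of false) ^ (toAdd (am p q false (ofAdd 1))) = _
    show (PresentedGroup.of false) ^ (toAdd ((ofAdd 1 : Multiplicative ℤ) ^ (q:ℤ))) = _
    rw [toAdd_zpow, toAdd_ofAdd, smul_eq_mul, mul_one, zpow_natCast, rel]
    exact (zpow_one _).symm
  · simp only [MonoidHom.comp_apply, zpowersHom_apply, if_true, zpow_one]
    show (PresentedGroup.of true) ^ (toAdd (am p q true (ofAdd 1))) = _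
    show (PresentedGroup.of true) ^ (toAdd ((ofAdd 1 : Multiplicative ℤ) ^ (p:ℤ))) = _
    rw [toAdd_zpow, toAdd_ofAdd, smul_eq_mul, mul_one, zpow_natCast]
    exact (zpow_one _).symm

/-- From the pushout to the presented group. -/
def Φ' : PushoutI (am p q) →* PresentedGroup (torusKnotRels p q) :=
  PushoutI.lift (fun b => zpowersHom _ (if b then PresentedGroup.of true else PresentedGroup.of false))
    (zpowersHom _ ((PresentedGroup.of (rels := torusKnotRels p q) true) ^ p)) (Φ'compat p q)

lemma Φ'_of (b : Bool) (m : Multiplicative ℤ) :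
    Φ' p q (PushoutI.of b m) =
      (if b then PresentedGroup.of (rels := torusKnotRels p q) true
        else PresentedGroup.of false) ^ (toAdd m) := by
  rw [Φ', PushoutI.lift_of, zpowersHom_apply]

lemma comp1 : (Φ' p q).comp (Φ p q) = MonoidHom.id _ := by
  apply PresentedGroup.ext
  intro b
  rw [MonoidHom.comp_apply, Φ_of, Φ'_of, MonoidHom.id_apply, toAdd_ofAdd, zpow_one]
  cases b <;> rfl

lemma comp2 : (Φ p q).comp (Φ' p q) = MonoidHom.id _ := by
  apply PushoutI.hom_ext_nonempty
  intro b
  refine MonoidHom.ext_mint ?_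
  rw [MonoidHom.comp_apply, MonoidHom.comp_apply, MonoidHom.comp_apply, MonoidHom.id_apply,
    Φ'_of, toAdd_ofAdd, zpow_one]
  cases b <;> simp [Φ_of]


/-- The clone endomorphism `x ↦ x^d`, `y ↦ y^d` of the torus knot group. -/
def ψ : PresentedGroup (torusKnotRels p q) →* PresentedGroup (torusKnotRels p q) :=
  ((Φ' p q).comp (Ψ p q d)).comp (Φ p q)

lemma ψ_of (b : Bool) : ψ p q d (PresentedGroup.of b) = (PresentedGroup.of b) ^ (d:ℤ) := by
  rw [ψ, MonoidHom.comp_apply, MonoidHom.comp_apply, Φ_of, Ψ_of, Φ'_of]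
  cases b <;>
    · rw [toAdd_zpow, toAdd_ofAdd, smul_eq_mul, mul_one]
      simp

lemma Φ_leftinv (g : PresentedGroup (torusKnotRels p q)) : Φ' p q (Φ p q g) = g :=
  DFunLike.congr_fun (comp1 p q) g

lemma Φ'_leftinv (g : PushoutI (am p q)) : Φ p q (Φ' p q g) = g :=
  DFunLike.congr_fun (comp2 p q) g

lemma ψ_injective (hp : p ≠ 0) (hq : q ≠ 0) (hd : d ≠ 0)
    (hdp : Nat.Coprime d p) (hdq : Nat.Coprime d q) :
    Function.Injective (ψ p q d) := by
  intro a b h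
  have h2 : Ψ p q d (Φ p q a) = Ψ p q d (Φ p q b) := by
    have := congrArg (Φ p q) h
    simpa [ψ, Φ'_leftinv] using this
  have h3 := Ψ_injective p q d hp hq hd hdp hdq h2
  have := congrArg (Φ' p q) h3
  simpa [Φ_leftinv] using this

lemma φrelcheck : ∀ r ∈ torusKnotRels p q,
    FreeGroup.lift (fun b => ofAdd (if b then (q:ℤ) else (p:ℤ))) r = 1 := by
  rintro r rfl
  rw [map_mul, map_inv, map_pow, map_pow, FreeGroup.lift_apply_of, FreeGroup.lift_apply_of]
  apply toAdd.injective
  simp only [toAdd_mul, toAdd_inv, toAdd_pow, toAdd_ofAdd, if_true, Bool.false_eq_true, if_false,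
    smul_eq_mul, toAdd_one]
  ring

/-- The degree homomorphism to `ℤ`, `x ↦ q`, `y ↦ p`. -/
def φmap : PresentedGroup (torusKnotRels p q) →* Multiplicative ℤ :=
  PresentedGroup.toGroup (φrelcheck p q)

lemma φmap_of (b : Bool) :
    φmap p q (PresentedGroup.of b) = ofAdd (if b then (q:ℤ) else (p:ℤ)) :=
  PresentedGroup.toGroup.of _

end TorusKnotClone

open TorusKnotClone Multiplicative Pointwise

/-- The torus knot group `G = ⟨x, y : xᵖ = y^q⟩` (`p, q ≥ 2` coprime) has, for every
`d ≥ 2` coprime to `pq`, a proper finite-index clone: there is a homomorphism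
`φ : G → ℤ` with `φ(x) = q` and `φ(y) = p`, and the kernel of its composition with
reduction mod `d` is a subgroup of index `d` isomorphic to `G`. -/
theorem torusKnotGroup_finite_index_clone (p q d : ℕ)
    (hp : 2 ≤ p) (hq : 2 ≤ q) (hpq : Nat.Coprime p q)
    (hd : 2 ≤ d) (hdpq : Nat.Coprime d (p * q)) :
    ∃ φ : PresentedGroup (torusKnotRels p q) →* Multiplicative ℤ,
      φ (PresentedGroup.of true) = Multiplicative.ofAdd (q : ℤ) ∧
      φ (PresentedGroup.of false) = Multiplicative.ofAdd (p : ℤ) ∧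
      ((AddMonoidHom.toMultiplicative (Int.castAddHom (ZMod d))).comp φ).ker.index = d ∧
      Nonempty
        ((((AddMonoidHom.toMultiplicative (Int.castAddHom (ZMod d))).comp φ).ker : Subgroup (PresentedGroup (torusKnotRels p q))) ≃*
          PresentedGroup (torusKnotRels p q)) := by
  classical
  have hp0 : p ≠ 0 := by omega
  have hq0 : q ≠ 0 := by omega
  have hd0 : d ≠ 0 := by omega
  have hdp : Nat.Coprime d p := Nat.Coprime.coprime_dvd_right ⟨q, rfl⟩ hdpq
  have hdq : Nat.Coprime d q := Nat.Coprime.coprime_dvd_right ⟨p, mul_comm p q⟩ hdpq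
  set G := PresentedGroup (torusKnotRels p q) with hG
  set F : G →* Multiplicative (ZMod d) :=
    (AddMonoidHom.toMultiplicative (Int.castAddHom (ZMod d))).comp (φmap p q) with hF
  have hfx : ∀ g : G, F g = ofAdd (((toAdd (φmap p q g) : ℤ) : ZMod d)) := fun g => by
    rw [hF, MonoidHom.comp_apply, AddMonoidHom.toMultiplicative_apply_apply,
      Int.coe_castAddHom]
  -- surjectivity of F
  have hsurj : Function.Surjective F := by
    intro c
    obtain ⟨m, hm⟩ := ZMod.intCast_surjective (toAdd c)
    obtain ⟨a, b, hab⟩ := Nat.isCoprime_iff_coprime.mpr hpq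
    refine ⟨(PresentedGroup.of false : G) ^ (m * a) * (PresentedGroup.of true) ^ (m * b), ?_⟩
    have hφv : φmap p q ((PresentedGroup.of false : G) ^ (m * a) *
        (PresentedGroup.of true) ^ (m * b)) = ofAdd (m * (a * (p:ℤ) + b * q)) := by
      rw [map_mul, map_zpow, map_zpow, φmap_of, φmap_of]
      apply toAdd.injective
      simp only [toAdd_mul, toAdd_zpow, toAdd_ofAdd, smul_eq_mul, if_true,
        Bool.false_eq_true, if_false]
      ring
    rw [hfx, hφv, toAdd_ofAdd, hab, mul_one, hm]
    exact ofAdd_toAdd c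
  refine ⟨φmap p q, by rw [φmap_of]; rfl, by rw [φmap_of]; rfl, ?_, ?_⟩
  · -- index
    have : NeZero d := ⟨hd0⟩
    rw [← hF, Subgroup.index_ker, MonoidHom.range_eq_top.mpr hsurj, Subgroup.card_top,
      Nat.card_congr (Multiplicative.toAdd (α := ZMod d)), Nat.card_zmod]
  · -- the isomorphism
    set x : G := PresentedGroup.of true with hx
    set y : G := PresentedGroup.of false with hy
    set z : G := x ^ (p:ℤ) with hz
    have hrelz : z = y ^ (q:ℤ) := by
      rw [hz, zpow_natCast, zpow_natCast, hx, hy, rel]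
    set K : Subgroup G := (ψ p q d).range with hK
    -- z is central
    have hcomm : ∀ g : G, Commute z g := by
      intro g
      have hmem : g ∈ Subgroup.centralizer {z} := by
        refine PresentedGroup.generated_by _ _ ?_ g
        intro b
        rw [Subgroup.mem_centralizer_iff]
        rintro h (rfl : h = z)
        cases b
        · show z * y = y * z
          rw [hrelz]
          exact ((Commute.refl y).zpow_left (q:ℤ))
        · show z * x = x * z
          rw [hz]
          exact ((Commute.refl x).zpow_left (p:ℤ))
      exact Subgroup.mem_centralizer_iff.1 hmem z rfl
    have hnormal : (Subgroup.zpowers z).Normal := by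
      constructor
      intro n hn g
      obtain ⟨k, rfl⟩ := Subgroup.mem_zpowers_iff.1 hn
      have hc : g * z ^ k = z ^ k * g := ((hcomm g).symm.zpow_right k)
      have : g * z ^ k * g⁻¹ = z ^ k := by
        rw [hc, mul_assoc, mul_inv_cancel, mul_one]
      rw [this]
      exact Subgroup.mem_zpowers_iff.2 ⟨k, rfl⟩
    -- φmap ∘ ψ = d-th power ∘ φmap
    have hφψ : ∀ g : G, φmap p q (ψ p q d g) = (φmap p q g) ^ (d:ℤ) := by
      have : (φmap p q).comp (ψ p q d) = (zpowGroupHom (d:ℤ)).comp (φmap p q) := by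
        apply PresentedGroup.ext
        intro b
        rw [MonoidHom.comp_apply, MonoidHom.comp_apply, ψ_of, map_zpow]
        rfl
      intro g
      exact DFunLike.congr_fun this g
    have hKker : K ≤ F.ker := by
      rintro _ ⟨g, rfl⟩
      rw [MonoidHom.mem_ker, hfx, hφψ, toAdd_zpow, smul_eq_mul]
      have h0 : (((d:ℤ) * toAdd (φmap p q g) : ℤ) : ZMod d) = 0 := by
        push_cast
        simp [ZMod.natCast_self]
      rw [h0]
      rfl
    -- ψ z = z ^ d
    have hψz : ψ p q d z = z ^ (d:ℤ) := by
      rw [hz, map_zpow, ψ_of, ← zpow_mul, ← zpow_mul, mul_comm]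
    -- K ⊔ zpowers z = ⊤
    have htop : K ⊔ Subgroup.zpowers z = ⊤ := by
      rw [eq_top_iff]
      intro g _
      refine PresentedGroup.generated_by _ _ ?_ g
      intro b
      cases b
      · obtain ⟨a, c, hac⟩ := Nat.isCoprime_iff_coprime.mpr hdq
        have hyeq : (ψ p q d y) ^ a * z ^ c = PresentedGroup.of false := by
          rw [ψ_of, hrelz, ← zpow_mul, ← zpow_mul, ← zpow_add, mul_comm (d:ℤ) a,
            mul_comm (q:ℤ) c]
          show y ^ (a * (d:ℤ) + c * q) = y
          rw [hac, zpow_one]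
        rw [← hyeq]
        exact Subgroup.mul_mem _
          (Subgroup.zpow_mem _ (Subgroup.mem_sup_left (show ψ p q d y ∈ K from ⟨y, rfl⟩)) a)
          (Subgroup.zpow_mem _ (Subgroup.mem_sup_right (Subgroup.mem_zpowers z)) c)
      · obtain ⟨a, c, hac⟩ := Nat.isCoprime_iff_coprime.mpr hdp
        have hxeq : (ψ p q d x) ^ a * z ^ c = PresentedGroup.of true := by
          rw [ψ_of, hz, ← zpow_mul, ← zpow_mul, ← zpow_add, mul_comm (d:ℤ) a,
            mul_comm (p:ℤ) c]
          show x ^ (a * (d:ℤ) + c * p) = x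
          rw [hac, zpow_one]
        rw [← hxeq]
        exact Subgroup.mul_mem _
          (Subgroup.zpow_mem _ (Subgroup.mem_sup_left (show ψ p q d x ∈ K from ⟨x, rfl⟩)) a)
          (Subgroup.zpow_mem _ (Subgroup.mem_sup_right (Subgroup.mem_zpowers z)) c)
    -- kernel is contained in K
    have hker : F.ker ≤ K := by
      intro g hg
      have hgtop : g ∈ K ⊔ Subgroup.zpowers z := htop ▸ Subgroup.mem_top g
      have hgmul : g ∈ (K : Set G) * (Subgroup.zpowers z : Set G) := by
        rw [← Subgroup.mul_normal K (Subgroup.zpowers z)]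
        exact hgtop
      obtain ⟨k, hk, w, hw, rfl⟩ := hgmul
      obtain ⟨n, rfl⟩ := Subgroup.mem_zpowers_iff.1 hw
      refine Subgroup.mul_mem _ hk ?_
      have hFk : F k = 1 := hKker hk
      have hFz : F (z ^ n) = 1 := by
        have := MonoidHom.mem_ker.mp hg
        rw [map_mul, hFk, one_mul] at this
        exact this
      have hφz : φmap p q z = ofAdd ((p:ℤ) * q) := by
        rw [hz, map_zpow, φmap_of]
        apply toAdd.injective
        rw [toAdd_zpow, toAdd_ofAdd]
        show (p:ℤ) • (if True then (q:ℤ) else (p:ℤ)) = (p:ℤ) * q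
        simp [smul_eq_mul]
      have hdvd : (d:ℤ) ∣ n * ((p:ℤ) * q) := by
        have h1 := hFz
        rw [hfx, map_zpow, hφz, toAdd_zpow, smul_eq_mul, toAdd_ofAdd] at h1
        have h0 : ((n * ((p:ℤ) * q) : ℤ) : ZMod d) = 0 := by
          have h2 := congrArg toAdd h1
          simpa using h2
        exact (ZMod.intCast_zmod_eq_zero_iff_dvd _ d).1 h0
      have hdn : (d:ℤ) ∣ n := by
        have hcop : IsCoprime (d:ℤ) ((p:ℤ) * q) := by
          have h3 := Nat.isCoprime_iff_coprime.mpr hdpq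
          push_cast at h3
          exact h3
        exact hcop.dvd_of_dvd_mul_right hdvd
      obtain ⟨m, rfl⟩ := hdn
      refine ⟨z ^ m, ?_⟩
      rw [map_zpow, hψz, ← zpow_mul]
    have hkrange : F.ker = (ψ p q d).range := le_antisymm hker hKker
    exact ⟨(MulEquiv.subgroupCongr hkrange).trans
      (MonoidHom.ofInjective (ψ_injective p q d hp0 hq0 hd0 hdp hdq)).symm⟩
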